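/- Let A be a unital prime complex *-algebra with a nontrivial projection p₁, set p₂ = 1 − p₁ and A_ij = p_i A p_j for i, j ∈ {1,2}, let B be a complex *-algebra, and let Φ : A → B be a bijective mapping satisfying Φ(xy + yx*) = Φ(x)Φ(y) + Φ(y)Φ(x)* for all x, y ∈ A. Then for arbitrary elements a₁₁ ∈ A₁₁, b₁₂ ∈ A₁₂, c₂₁ ∈ A₂₁ and d₂₂ ∈ A₂₂: Φ(a₁₁ + b₁₂ + c₂₁ + d₂₂) = Φ(a₁₁) + Φ(b₁₂) + Φ(c₂₁) + Φ(d₂₂). -/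
import Mathlib
set_option linter.unusedSectionVars false
namespace Stmt17Aux

variable {A B : Type*} [Ring A] [Algebra ℂ A] [StarRing A]
  [Ring B] [StarRing B]

lemma two_cancel (x y : A) (e : x + x = y + y) : x = y := by
  have h2 : (2:ℂ) • x = (2:ℂ) • y := by rw [two_smul, two_smul]; exact e
  have h3 := congrArg (fun z => ((2:ℂ)⁻¹) • z) h2
  simpa [smul_smul] using h3

lemma labs {p q u : A} (hp : p*p = p) (hu : u = p*u*q) : p*u = u := by
  conv_lhs => rw [hu]
  rw [← mul_assoc, ← mul_assoc, hp, ← hu]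

lemma rabs {p q u : A} (hq : q*q = q) (hu : u = p*u*q) : u*q = u := by
  conv_lhs => rw [hu]
  rw [mul_assoc, hq, ← hu]

lemma lzero {p q r u : A} (hrp : r*p = 0) (hu : u = p*u*q) : r*u = 0 := by
  rw [hu, ← mul_assoc, ← mul_assoc, hrp, zero_mul, zero_mul]

lemma rzero {p q r u : A} (hqr : q*r = 0) (hu : u = p*u*q) : u*r = 0 := by
  rw [hu, mul_assoc, hqr, mul_zero]

lemma smem {p q u : A} (hp : star p = p) (hq : star q = q) (hu : u = p*u*q) :
    star u = q * star u * p := by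
  conv_lhs => rw [hu]
  simp [star_mul, hp, hq, mul_assoc]

lemma mulmem {p q r u w : A} (hp : p*p = p) (hr : r*r = r) (hu : u = p*u*q) (hw : w = q*w*r) :
    u*w = p*(u*w)*r := by
  have h1 : p*(u*w) = u*w := by rw [← mul_assoc, labs hp hu]
  have h2 : (u*w)*r = u*w := by rw [mul_assoc, rabs hr hw]
  rw [h1, h2]

lemma addmem {p q u w : A} (hu : u = p*u*q) (hw : w = p*w*q) : u + w = p*(u+w)*q := by
  rw [mul_add, add_mul, ← hu, ← hw]

lemma decomp (q₁ q₂ T : A) (hsum : q₁ + q₂ = 1) :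
    T = q₁*T*q₁ + q₁*T*q₂ + q₂*T*q₁ + q₂*T*q₂ := by
  calc T = (q₁+q₂)*T*(q₁+q₂) := by rw [hsum, one_mul, mul_one]
  _ = q₁*T*q₁ + q₁*T*q₂ + q₂*T*q₁ + q₂*T*q₂ := by noncomm_ring

lemma aux2 (q₁ q₂ : A)
    (h11 : q₁*q₁ = q₁) (h22 : q₂*q₂ = q₂) (h12 : q₁*q₂ = 0) (h21 : q₂*q₁ = 0)
    (hsum : q₁ + q₂ = 1) (hs1 : star q₁ = q₁) (hs2 : star q₂ = q₂)
    (Φ : A → B) (hΦ : Function.Bijective Φ)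
    (h : ∀ x y : A, Φ (x * y + y * star x) = Φ x * Φ y + Φ y * star (Φ x))
    (hΦ0 : Φ 0 = 0)
    (u v : A) (hu : u = q₁*u*q₂) (hv : v = q₂*v*q₁) :
    Φ (u + v) = Φ u + Φ v := by
  have hinj := hΦ.1
  obtain ⟨T, hT⟩ := hΦ.2 (Φ u + Φ v)
  set s : A := q₂ - q₁ with hsdef
  have hss : star s = s := by rw [hsdef, star_sub, hs1, hs2]
  have hq1s : q₁ * s = -q₁ := by rw [hsdef, mul_sub, h12, h11, zero_sub]
  have hsq1 : s * q₁ = -q₁ := by rw [hsdef, sub_mul, h21, h11, zero_sub]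
  have hq2s : q₂ * s = q₂ := by rw [hsdef, mul_sub, h22, h21, sub_zero]
  have hsq2 : s * q₂ = q₂ := by rw [hsdef, sub_mul, h22, h12, sub_zero]
  have hu' : star u = q₂ * star u * q₁ := smem hs1 hs2 hu
  have hv' : star v = q₁ * star v * q₂ := smem hs2 hs1 hv
  have hsu : s*u + u*s = 0 := by
    have e1 : s*u = -u := by rw [hsdef, sub_mul, lzero h21 hu, labs h11 hu, zero_sub]
    have e2 : u*s = u := by rw [hsdef, mul_sub, rabs h22 hu, rzero h21 hu, sub_zero]
    rw [e1, e2, neg_add_cancel]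
  have hsv : s*v + v*s = 0 := by
    have e1 : s*v = v := by rw [hsdef, sub_mul, labs h22 hv, lzero h12 hv, sub_zero]
    have e2 : v*s = -v := by rw [hsdef, mul_sub, rzero h12 hv, rabs h11 hv, zero_sub]
    rw [e1, e2, add_neg_cancel]
  -- Step A
  have hA : Φ (s*T + T*s) = 0 := by
    have e := h s T
    rw [hss, hT] at e
    have eu := h s u; rw [hss, hsu, hΦ0] at eu
    have ev := h s v; rw [hss, hsv, hΦ0] at ev
    rw [e, show Φ s * (Φ u + Φ v) + (Φ u + Φ v) * star (Φ s)
        = (Φ s * Φ u + Φ u * star (Φ s)) + (Φ s * Φ v + Φ v * star (Φ s)) from by noncomm_ring,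
      ← eu, ← ev, add_zero]
  have hST : s*T + T*s = 0 := hinj (by rw [hA, hΦ0])
  have c11 : q₁*T*q₁ = 0 := by
    have e : q₁*(s*T+T*s)*q₁ = 0 := by rw [hST, mul_zero, zero_mul]
    rw [show q₁*(s*T+T*s)*q₁ = (q₁*s)*(T*q₁) + (q₁*T)*(s*q₁) from by noncomm_ring,
      hq1s, hsq1] at e
    have e2 : q₁*T*q₁ + q₁*T*q₁ = 0 + 0 := by
      rw [add_zero, ← neg_eq_zero, neg_add]
      rw [show -(q₁*T*q₁) + -(q₁*T*q₁) = -q₁*(T*q₁) + q₁*T*(-q₁) from by noncomm_ring]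
      exact e
    exact two_cancel _ _ e2
  have c22 : q₂*T*q₂ = 0 := by
    have e : q₂*(s*T+T*s)*q₂ = 0 := by rw [hST, mul_zero, zero_mul]
    rw [show q₂*(s*T+T*s)*q₂ = (q₂*s)*(T*q₂) + (q₂*T)*(s*q₂) from by noncomm_ring,
      hq2s, hsq2] at e
    have e2 : q₂*T*q₂ + q₂*T*q₂ = 0 + 0 := by
      rw [add_zero]
      rw [show q₂*T*q₂ + q₂*T*q₂ = q₂*(T*q₂) + q₂*T*q₂ from by noncomm_ring]
      exact e
    exact two_cancel _ _ e2
  -- Step B with q₁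
  have eB := h T q₁
  rw [hT] at eB
  have eu1 := h u q₁
  rw [rzero h21 hu, lzero h12 hu', add_zero, hΦ0] at eu1
  have ev1 := h v q₁
  rw [rabs h11 hv, labs h11 hv'] at ev1
  have eB' : T*q₁ + q₁*star T = v + star v := by
    apply hinj
    rw [eB, star_add, show (Φ u + Φ v) * Φ q₁ + Φ q₁ * (star (Φ u) + star (Φ v))
        = (Φ u * Φ q₁ + Φ q₁ * star (Φ u)) + (Φ v * Φ q₁ + Φ q₁ * star (Φ v)) from by noncomm_ring,
      ← eu1, ← ev1, zero_add]
  have c21 : q₂*T*q₁ = v := by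
    have e1 : q₂*(T*q₁ + q₁*star T)*q₁ = q₂*T*q₁ := by
      rw [show q₂*(T*q₁ + q₁*star T)*q₁ = (q₂*T)*(q₁*q₁) + (q₂*q₁)*(star T*q₁) from by noncomm_ring,
        h11, h21, zero_mul, add_zero, mul_assoc]
    have e2 : q₂*(v + star v)*q₁ = v := by
      rw [mul_add, add_mul, ← hv, lzero h21 hv', zero_mul, add_zero]
    rw [← e1, eB', e2]
  -- Step B with q₂
  have eB2 := h T q₂
  rw [hT] at eB2
  have eu2 := h u q₂
  rw [rabs h22 hu, labs h22 hu'] at eu2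
  have ev2 := h v q₂
  rw [rzero h12 hv, lzero h21 hv', add_zero, hΦ0] at ev2
  have eB2' : T*q₂ + q₂*star T = u + star u := by
    apply hinj
    rw [eB2, star_add, show (Φ u + Φ v) * Φ q₂ + Φ q₂ * (star (Φ u) + star (Φ v))
        = (Φ u * Φ q₂ + Φ q₂ * star (Φ u)) + (Φ v * Φ q₂ + Φ q₂ * star (Φ v)) from by noncomm_ring,
      ← eu2, ← ev2, add_zero]
  have c12 : q₁*T*q₂ = u := by
    have e1 : q₁*(T*q₂ + q₂*star T)*q₂ = q₁*T*q₂ := by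
      rw [show q₁*(T*q₂ + q₂*star T)*q₂ = (q₁*T)*(q₂*q₂) + (q₁*q₂)*(star T*q₂) from by noncomm_ring,
        h22, h12, zero_mul, add_zero, mul_assoc]
    have e2 : q₁*(u + star u)*q₂ = u := by
      rw [mul_add, add_mul, ← hu, lzero h12 hu', zero_mul, add_zero]
    rw [← e1, eB2', e2]
  have hTuv : T = u + v := by
    have e := decomp q₁ q₂ T hsum
    rw [c11, c12, c21, c22] at e
    simpa using e
  rw [hTuv] at hT
  exact hT

lemma aux3 (q₁ q₂ : A)
    (hAprime : ∀ a b : A, (∀ x : A, a * x * b = 0) → a = 0 ∨ b = 0)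
    (hq₂0 : q₂ ≠ 0)
    (h11 : q₁*q₁ = q₁) (h22 : q₂*q₂ = q₂) (h12 : q₁*q₂ = 0) (h21 : q₂*q₁ = 0)
    (hsum : q₁ + q₂ = 1) (hs1 : star q₁ = q₁) (hs2 : star q₂ = q₂)
    (Φ : A → B) (hΦ : Function.Bijective Φ)
    (h : ∀ x y : A, Φ (x * y + y * star x) = Φ x * Φ y + Φ y * star (Φ x))
    (hΦ0 : Φ 0 = 0)
    (a b c : A) (ha : a = q₁*a*q₁) (hb : b = q₁*b*q₂) (hc : c = q₂*c*q₁) :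
    Φ (a + b + c) = Φ a + Φ b + Φ c := by
  have hinj := hΦ.1
  obtain ⟨T, hT⟩ := hΦ.2 (Φ a + Φ b + Φ c)
  set s : A := q₂ - q₁ with hsdef
  have hss : star s = s := by rw [hsdef, star_sub, hs1, hs2]
  have hq1s : q₁ * s = -q₁ := by rw [hsdef, mul_sub, h12, h11, zero_sub]
  have hsq1 : s * q₁ = -q₁ := by rw [hsdef, sub_mul, h21, h11, zero_sub]
  have hq2s : q₂ * s = q₂ := by rw [hsdef, mul_sub, h22, h21, sub_zero]
  have hsq2 : s * q₂ = q₂ := by rw [hsdef, sub_mul, h22, h12, sub_zero]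
  have ha' : star a = q₁ * star a * q₁ := smem hs1 hs1 ha
  have hb' : star b = q₂ * star b * q₁ := smem hs1 hs2 hb
  have hc' : star c = q₁ * star c * q₂ := smem hs2 hs1 hc
  have hsa : s*a + a*s = -(a + a) := by
    have e1 : s*a = -a := by rw [hsdef, sub_mul, lzero h21 ha, labs h11 ha, zero_sub]
    have e2 : a*s = -a := by rw [hsdef, mul_sub, rzero h12 ha, rabs h11 ha, zero_sub]
    rw [e1, e2, ← neg_add]
  have hsb : s*b + b*s = 0 := by
    have e1 : s*b = -b := by rw [hsdef, sub_mul, lzero h21 hb, labs h11 hb, zero_sub]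
    have e2 : b*s = b := by rw [hsdef, mul_sub, rabs h22 hb, rzero h21 hb, sub_zero]
    rw [e1, e2, neg_add_cancel]
  have hsc : s*c + c*s = 0 := by
    have e1 : s*c = c := by rw [hsdef, sub_mul, labs h22 hc, lzero h12 hc, sub_zero]
    have e2 : c*s = -c := by rw [hsdef, mul_sub, rzero h12 hc, rabs h11 hc, zero_sub]
    rw [e1, e2, add_neg_cancel]
  -- Step A
  have hA : Φ (s*T + T*s) = Φ (-(a+a)) := by
    have e := h s T
    rw [hss, hT] at e
    have ea := h s a; rw [hss, hsa] at ea
    have eb := h s b; rw [hss, hsb, hΦ0] at eb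
    have ec := h s c; rw [hss, hsc, hΦ0] at ec
    rw [e, show Φ s * (Φ a + Φ b + Φ c) + (Φ a + Φ b + Φ c) * star (Φ s)
        = (Φ s * Φ a + Φ a * star (Φ s)) + ((Φ s * Φ b + Φ b * star (Φ s)) + (Φ s * Φ c + Φ c * star (Φ s))) from by noncomm_ring,
      ← ea, ← eb, ← ec, add_zero, add_zero]
  have hST : s*T + T*s = -(a+a) := hinj (by rw [hA])
  have c11 : q₁*T*q₁ = a := by
    have e : q₁*(s*T+T*s)*q₁ = q₁*(-(a+a))*q₁ := by rw [hST]
    rw [show q₁*(s*T+T*s)*q₁ = (q₁*s)*(T*q₁) + (q₁*T)*(s*q₁) from by noncomm_ring,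
      hq1s, hsq1,
      show q₁*(-(a+a))*q₁ = -((q₁*a*q₁) + (q₁*a*q₁)) from by noncomm_ring, ← ha] at e
    have e2 : q₁*T*q₁ + q₁*T*q₁ = a + a := by
      have e3 : -(q₁*T*q₁ + q₁*T*q₁) = -(a+a) := by
        rw [show -(q₁*T*q₁ + q₁*T*q₁) = -q₁*(T*q₁) + q₁*T*(-q₁) from by noncomm_ring]
        exact e
      exact neg_injective e3
    exact two_cancel _ _ e2
  have c22 : q₂*T*q₂ = 0 := by
    have e : q₂*(s*T+T*s)*q₂ = q₂*(-(a+a))*q₂ := by rw [hST]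
    rw [show q₂*(s*T+T*s)*q₂ = (q₂*s)*(T*q₂) + (q₂*T)*(s*q₂) from by noncomm_ring,
      hq2s, hsq2,
      show q₂*(-(a+a))*q₂ = -(q₂*a*q₂ + q₂*a*q₂) from by noncomm_ring,
      lzero h21 ha, zero_mul, add_zero, neg_zero] at e
    have e2 : q₂*T*q₂ + q₂*T*q₂ = 0 + 0 := by
      rw [add_zero, show q₂*T*q₂ + q₂*T*q₂ = q₂*(T*q₂) + q₂*T*q₂ from by noncomm_ring]
      exact e
    exact two_cancel _ _ e2
  -- Step B : multiply by arbitrary f = q₂ x q₂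
  have hBmain : ∀ x : A, (q₂*x*q₂) * (q₂*T*q₁) = (q₂*x*q₂) * c ∧
      (q₁*T*q₂) * star (q₂*x*q₂) = b * star (q₂*x*q₂) := by
    intro x
    set f : A := q₂*x*q₂ with hfdef
    have hf : f = q₂*f*q₂ := by
      rw [hfdef, show q₂*(q₂*x*q₂)*q₂ = (q₂*q₂)*x*(q₂*q₂) from by noncomm_ring, h22]
    have hf' : star f = q₂ * star f * q₂ := smem hs2 hs2 hf
    have ef := h f T
    rw [hT] at ef
    have ea2 := h f a
    rw [lzero (rzero h21 hf) ha, rzero (lzero h12 hf') ha, add_zero, hΦ0] at ea2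
    have eb2 := h f b
    rw [lzero (rzero h21 hf) hb, zero_add] at eb2
    have ec2 := h f c
    rw [rzero (lzero h12 hf') hc, add_zero] at ec2
    have m1 : b * star f = q₁*(b*star f)*q₂ := mulmem h11 h22 hb hf'
    have m2 : f * c = q₂*(f*c)*q₁ := mulmem h22 h11 hf hc
    have hsum2 : Φ (b*star f + f*c) = Φ (b*star f) + Φ (f*c) :=
      aux2 q₁ q₂ h11 h22 h12 h21 hsum hs1 hs2 Φ hΦ h hΦ0 _ _ m1 m2
    have eT : f*T + T*star f = b*star f + f*c := by
      apply hinj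
      rw [ef, hsum2, show Φ f * (Φ a + Φ b + Φ c) + (Φ a + Φ b + Φ c) * star (Φ f)
          = (Φ f * Φ a + Φ a * star (Φ f)) + ((Φ f * Φ b + Φ b * star (Φ f)) + (Φ f * Φ c + Φ c * star (Φ f))) from by noncomm_ring,
        ← ea2, ← eb2, ← ec2, zero_add]
    constructor
    · have e1 : q₂*(f*T + T*star f)*q₁ = f*(q₂*T*q₁) := by
        rw [show q₂*(f*T + T*star f)*q₁ = (q₂*f)*(T*q₁) + (q₂*T)*(star f*q₁) from by noncomm_ring,
          labs h22 hf, rzero h21 hf', mul_zero, add_zero,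
          show f*(T*q₁) = (f*q₂)*(T*q₁) from by rw [rabs h22 hf],
          show (f*q₂)*(T*q₁) = f*(q₂*T*q₁) from by noncomm_ring]
      have e2 : q₂*(b*star f + f*c)*q₁ = f*c := by
        rw [mul_add, add_mul, lzero h21 m1, zero_mul, zero_add, ← m2]
      rw [← e1, eT, e2]
    · have e1 : q₁*(f*T + T*star f)*q₂ = (q₁*T*q₂)*star f := by
        rw [show q₁*(f*T + T*star f)*q₂ = (q₁*f)*(T*q₂) + (q₁*T)*(star f*q₂) from by noncomm_ring,
          lzero h12 hf, zero_mul, zero_add, rabs h22 hf',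
          show (q₁*T*q₂)*star f = (q₁*T)*(q₂*star f) from by noncomm_ring, labs h22 hf']
      have e2 : q₁*(b*star f + f*c)*q₂ = b*star f := by
        rw [mul_add, add_mul, lzero h12 m2, zero_mul, add_zero, ← m1]
      rw [← e1, eT, e2]
  have c21 : q₂*T*q₁ = c := by
    have m : q₂*(q₂*T*q₁ - c) = q₂*T*q₁ - c := by
      rw [mul_sub, show q₂*(q₂*T*q₁) = (q₂*q₂)*T*q₁ from by noncomm_ring, h22, labs h22 hc]
    have hz : ∀ x : A, q₂ * x * (q₂*T*q₁ - c) = 0 := by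
      intro x
      have h1 := (hBmain x).1
      calc q₂*x*(q₂*T*q₁ - c) = (q₂*x*q₂)*(q₂*T*q₁ - c) := by
            conv_lhs => rw [← m]
            rw [show q₂*x*(q₂*(q₂*T*q₁ - c)) = (q₂*x*q₂)*(q₂*T*q₁ - c) from by noncomm_ring]
      _ = (q₂*x*q₂)*(q₂*T*q₁) - (q₂*x*q₂)*c := by rw [mul_sub]
      _ = 0 := by rw [h1, sub_self]
    rcases hAprime q₂ (q₂*T*q₁ - c) hz with h' | h'
    · exact absurd h' hq₂0
    · exact sub_eq_zero.mp h'
  have c12 : q₁*T*q₂ = b := by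
    have m : (q₁*T*q₂ - b)*q₂ = q₁*T*q₂ - b := by
      rw [sub_mul, mul_assoc (q₁*T) q₂ q₂, h22, rabs h22 hb]
    have hz : ∀ x : A, (q₁*T*q₂ - b) * x * q₂ = 0 := by
      intro x
      have h1 := (hBmain (star x)).2
      have hst : star (q₂*(star x)*q₂) = q₂*x*q₂ := by
        simp [star_mul, hs2, mul_assoc]
      rw [hst] at h1
      calc (q₁*T*q₂ - b)*x*q₂ = (q₁*T*q₂ - b)*(q₂*x*q₂) := by
            conv_lhs => rw [← m]
            rw [show ((q₁*T*q₂ - b)*q₂)*x*q₂ = (q₁*T*q₂ - b)*(q₂*x*q₂) from by noncomm_ring]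
      _ = (q₁*T*q₂)*(q₂*x*q₂) - b*(q₂*x*q₂) := by rw [sub_mul]
      _ = 0 := by rw [h1, sub_self]
    rcases hAprime (q₁*T*q₂ - b) q₂ hz with h' | h'
    · exact sub_eq_zero.mp h'
    · exact absurd h' hq₂0
  have hTabc : T = a + b + c := by
    have e := decomp q₁ q₂ T hsum
    rw [c11, c12, c21, c22] at e
    simpa using e
  rw [hTabc] at hT
  exact hT

end Stmt17Aux

open Stmt17Aux in
/-- Claim 2.4: additivity on the full Peirce decomposition.
Membership a ∈ A_ij = pᵢ A pⱼ is expressed as a = pᵢ * a * pⱼ. -/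
theorem stmt_17 {A B : Type*}
    [Ring A] [Algebra ℂ A] [StarRing A] [StarModule ℂ A]
    [Ring B] [Algebra ℂ B] [StarRing B] [StarModule ℂ B]
    (hAprime : ∀ a b : A, (∀ x : A, a * x * b = 0) → a = 0 ∨ b = 0)
    (p₁ p₂ : A) (hp₁0 : p₁ ≠ 0) (hp₁1 : p₁ ≠ 1) (hp₁sa : star p₁ = p₁)
    (hp₁idem : p₁ * p₁ = p₁) (hp₂ : p₂ = 1 - p₁)
    (Φ : A → B) (hΦ : Function.Bijective Φ)
    (h : ∀ x y : A, Φ (x * y + y * star x) = Φ x * Φ y + Φ y * star (Φ x))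
    (a₁₁ b₁₂ c₂₁ d₂₂ : A)
    (ha : a₁₁ = p₁ * a₁₁ * p₁) (hb : b₁₂ = p₁ * b₁₂ * p₂)
    (hc : c₂₁ = p₂ * c₂₁ * p₁) (hd : d₂₂ = p₂ * d₂₂ * p₂) :
    Φ (a₁₁ + b₁₂ + c₂₁ + d₂₂) = Φ a₁₁ + Φ b₁₂ + Φ c₂₁ + Φ d₂₂ := by
  have h12 : p₁ * p₂ = 0 := by rw [hp₂, mul_sub, mul_one, hp₁idem, sub_self]
  have h21 : p₂ * p₁ = 0 := by rw [hp₂, sub_mul, one_mul, hp₁idem, sub_self]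
  have hp₂idem : p₂ * p₂ = p₂ := by
    rw [hp₂, mul_sub, mul_one, sub_mul, one_mul, hp₁idem, sub_self, sub_zero]
  have hp₂sa : star p₂ = p₂ := by rw [hp₂, star_sub, star_one, hp₁sa]
  have hsum : p₁ + p₂ = 1 := by rw [hp₂]; abel
  have hsum' : p₂ + p₁ = 1 := by rw [add_comm]; exact hsum
  have hp₂0 : p₂ ≠ 0 := by rw [hp₂, sub_ne_zero]; exact fun e => hp₁1 e.symm
  have hinj := hΦ.1
  have hΦ0 : Φ 0 = 0 := by
    obtain ⟨s0, hs0⟩ := hΦ.2 0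
    have e := h s0 0
    rw [hs0] at e
    simpa using e
  obtain ⟨T, hT⟩ := hΦ.2 (Φ a₁₁ + Φ b₁₂ + Φ c₂₁ + Φ d₂₂)
  have e1 : p₁*T + T*p₁ = (a₁₁+a₁₁) + b₁₂ + c₂₁ := by
    apply hinj
    have eB := h p₁ T; rw [hp₁sa, hT] at eB
    have ea := h p₁ a₁₁
    rw [hp₁sa, labs hp₁idem ha, rabs hp₁idem ha] at ea
    have eb := h p₁ b₁₂
    rw [hp₁sa, labs hp₁idem hb, rzero h21 hb, add_zero] at eb
    have ec := h p₁ c₂₁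
    rw [hp₁sa, lzero h12 hc, rabs hp₁idem hc, zero_add] at ec
    have ed := h p₁ d₂₂
    rw [hp₁sa, lzero h12 hd, rzero h21 hd, add_zero, hΦ0] at ed
    rw [eB, show Φ p₁ * (Φ a₁₁ + Φ b₁₂ + Φ c₂₁ + Φ d₂₂)
          + (Φ a₁₁ + Φ b₁₂ + Φ c₂₁ + Φ d₂₂) * star (Φ p₁)
        = (Φ p₁ * Φ a₁₁ + Φ a₁₁ * star (Φ p₁)) + (Φ p₁ * Φ b₁₂ + Φ b₁₂ * star (Φ p₁))
          + (Φ p₁ * Φ c₂₁ + Φ c₂₁ * star (Φ p₁)) + (Φ p₁ * Φ d₂₂ + Φ d₂₂ * star (Φ p₁))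
        from by noncomm_ring,
      ← ea, ← eb, ← ec, ← ed, add_zero,
      aux3 p₁ p₂ hAprime hp₂0 hp₁idem hp₂idem h12 h21 hsum hp₁sa hp₂sa Φ hΦ h hΦ0
        (a₁₁+a₁₁) b₁₂ c₂₁ (addmem ha ha) hb hc]
  have c11 : p₁*T*p₁ = a₁₁ := by
    have e : p₁*(p₁*T + T*p₁)*p₁ = p₁*((a₁₁+a₁₁) + b₁₂ + c₂₁)*p₁ := by rw [e1]
    rw [show p₁*(p₁*T + T*p₁)*p₁ = (p₁*p₁)*T*p₁ + (p₁*T)*(p₁*p₁) from by noncomm_ring,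
      hp₁idem,
      show p₁*((a₁₁+a₁₁) + b₁₂ + c₂₁)*p₁
        = (p₁*(a₁₁+a₁₁))*p₁ + (p₁*b₁₂)*p₁ + (p₁*c₂₁)*p₁ from by noncomm_ring,
      labs hp₁idem (addmem ha ha), rabs hp₁idem (addmem ha ha),
      labs hp₁idem hb, rzero h21 hb, lzero h12 hc, zero_mul, add_zero, add_zero] at e
    exact two_cancel _ _ e
  have c12 : p₁*T*p₂ = b₁₂ := by
    have e : p₁*(p₁*T + T*p₁)*p₂ = p₁*((a₁₁+a₁₁) + b₁₂ + c₂₁)*p₂ := by rw [e1]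
    rw [show p₁*(p₁*T + T*p₁)*p₂ = (p₁*p₁)*T*p₂ + (p₁*T)*(p₁*p₂) from by noncomm_ring,
      hp₁idem, h12, mul_zero, add_zero,
      show p₁*((a₁₁+a₁₁) + b₁₂ + c₂₁)*p₂
        = (p₁*(a₁₁+a₁₁))*p₂ + (p₁*b₁₂)*p₂ + (p₁*c₂₁)*p₂ from by noncomm_ring,
      labs hp₁idem (addmem ha ha), rzero h12 (addmem ha ha),
      labs hp₁idem hb, rabs hp₂idem hb, lzero h12 hc, zero_mul, add_zero, zero_add] at e
    exact e
  have c21 : p₂*T*p₁ = c₂₁ := by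
    have e : p₂*(p₁*T + T*p₁)*p₁ = p₂*((a₁₁+a₁₁) + b₁₂ + c₂₁)*p₁ := by rw [e1]
    rw [show p₂*(p₁*T + T*p₁)*p₁ = (p₂*p₁)*T*p₁ + (p₂*T)*(p₁*p₁) from by noncomm_ring,
      hp₁idem, h21, zero_mul, zero_mul, zero_add,
      show p₂*((a₁₁+a₁₁) + b₁₂ + c₂₁)*p₁
        = (p₂*(a₁₁+a₁₁))*p₁ + (p₂*b₁₂)*p₁ + (p₂*c₂₁)*p₁ from by noncomm_ring,
      lzero h21 (addmem ha ha), lzero h21 hb, zero_mul, zero_add, zero_add,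
      labs hp₂idem hc, rabs hp₁idem hc] at e
    exact e
  have e2 : p₂*T + T*p₂ = (d₂₂+d₂₂) + c₂₁ + b₁₂ := by
    apply hinj
    have eB := h p₂ T; rw [hp₂sa, hT] at eB
    have ea := h p₂ a₁₁
    rw [hp₂sa, lzero h21 ha, rzero h12 ha, add_zero, hΦ0] at ea
    have eb := h p₂ b₁₂
    rw [hp₂sa, lzero h21 hb, rabs hp₂idem hb, zero_add] at eb
    have ec := h p₂ c₂₁
    rw [hp₂sa, labs hp₂idem hc, rzero h12 hc, add_zero] at ec
    have ed := h p₂ d₂₂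
    rw [hp₂sa, labs hp₂idem hd, rabs hp₂idem hd] at ed
    rw [eB, show Φ p₂ * (Φ a₁₁ + Φ b₁₂ + Φ c₂₁ + Φ d₂₂)
          + (Φ a₁₁ + Φ b₁₂ + Φ c₂₁ + Φ d₂₂) * star (Φ p₂)
        = (Φ p₂ * Φ a₁₁ + Φ a₁₁ * star (Φ p₂)) + (Φ p₂ * Φ b₁₂ + Φ b₁₂ * star (Φ p₂))
          + (Φ p₂ * Φ c₂₁ + Φ c₂₁ * star (Φ p₂)) + (Φ p₂ * Φ d₂₂ + Φ d₂₂ * star (Φ p₂))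
        from by noncomm_ring,
      ← ea, ← eb, ← ec, ← ed, zero_add,
      aux3 p₂ p₁ hAprime hp₁0 hp₂idem hp₁idem h21 h12 hsum' hp₂sa hp₁sa Φ hΦ h hΦ0
        (d₂₂+d₂₂) c₂₁ b₁₂ (addmem hd hd) hc hb]
    abel
  have c22 : p₂*T*p₂ = d₂₂ := by
    have e : p₂*(p₂*T + T*p₂)*p₂ = p₂*((d₂₂+d₂₂) + c₂₁ + b₁₂)*p₂ := by rw [e2]
    rw [show p₂*(p₂*T + T*p₂)*p₂ = (p₂*p₂)*T*p₂ + (p₂*T)*(p₂*p₂) from by noncomm_ring,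
      hp₂idem,
      show p₂*((d₂₂+d₂₂) + c₂₁ + b₁₂)*p₂
        = (p₂*(d₂₂+d₂₂))*p₂ + (p₂*c₂₁)*p₂ + (p₂*b₁₂)*p₂ from by noncomm_ring,
      labs hp₂idem (addmem hd hd), rabs hp₂idem (addmem hd hd),
      labs hp₂idem hc, rzero h12 hc, lzero h21 hb, zero_mul, add_zero, add_zero] at e
    exact two_cancel _ _ e
  have hdec := decomp p₁ p₂ T hsum
  rw [c11, c12, c21, c22] at hdec
  rw [hdec] at hT
  exact hT
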